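/- Let C_M be a linear MRD[m×n, δ]_q code with m ≥ n, given by a generator matrix G = (I_k | A) over F_{q^m} where k = n − δ + 1, and let 0 ≤ λ_0 ≤ λ_1 ≤ ⋯ ≤ λ_{k−1} ≤ m. Let U be the set of vectors (u_0, …, u_{k−1}) ∈ F_{q^m}^k such that the coordinate vector of each u_i with respect to a fixed ordered basis of F_{q^m} over F_q is supported on its first λ_i positions. Then C = {Ψ_m(uG) : u ∈ U} is an F_q-linear rank-metric code of dimension Σ_{i=0}^{k−1} λ_i and minimum rank distance at least δ, and each codeword Ψ_m(uG) has its i-th column (0 ≤ i ≤ k−1) supported on the first λ_i entries. -/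

import Mathlib

/-- Subcodes of a systematic MRD code restricted on the supports of the message
coordinates give Ferrers-diagram rank-metric codes (Lemma 2.5 / Lemma 3.1 of [lf]). -/
theorem stmt3 {F K : Type*} [Field F] [Field K] [Algebra F K] {m n δ k : ℕ}
    (hmn : n ≤ m) (hδ1 : 1 ≤ δ) (hδn : δ ≤ n) (hk : k = n - δ + 1) (hkn : k ≤ n)
    (β : Module.Basis (Fin m) F K)
    (G : Matrix (Fin k) (Fin n) K)
    (hsys : ∀ (i : Fin k) (j : Fin n), (j : ℕ) < k →
      G i j = if (i : ℕ) = (j : ℕ) then 1 else 0)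
    (hMRD : ∀ u : Fin k → K, u ≠ 0 →
      δ ≤ (Matrix.of fun (i : Fin m) (j : Fin n) =>
        β.repr (Matrix.vecMul u G j) i).rank)
    (lam : Fin k → ℕ) (hmono : Monotone lam) (hlam : ∀ i, lam i ≤ m)
    (U : Set (Fin k → K))
    (hU : U = {u | ∀ (i : Fin k) (r : Fin m), lam i ≤ (r : ℕ) → β.repr (u i) r = 0}) :
    ∃ C : Submodule F (Matrix (Fin m) (Fin n) F),
      (C : Set (Matrix (Fin m) (Fin n) F))
        = (fun u : Fin k → K => Matrix.of fun (i : Fin m) (j : Fin n) =>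
            β.repr (Matrix.vecMul u G j) i) '' U ∧
      Module.finrank F C = ∑ i, lam i ∧
      (∀ A ∈ C, A ≠ 0 → δ ≤ A.rank) ∧
      (∀ u ∈ U, ∀ (i : Fin k) (r : Fin m), lam i ≤ (r : ℕ) →
        (Matrix.of fun (i' : Fin m) (j : Fin n) =>
          β.repr (Matrix.vecMul u G j) i') r (Fin.castLE hkn i) = 0) := by
  haveI : Module.Finite F K := Module.Finite.of_basis β
  -- Key lemma: the systematic columns recover the message coordinates
  have key : ∀ (u : Fin k → K) (i : Fin k),
      Matrix.vecMul u G (Fin.castLE hkn i) = u i := by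
    intro u i
    have hcol : ∀ i' : Fin k, G i' (Fin.castLE hkn i) = if i' = i then 1 else 0 := by
      intro i'
      rw [hsys i' (Fin.castLE hkn i) (by simpa using i.isLt)]
      simp [Fin.ext_iff]
    simp only [Matrix.vecMul, dotProduct, hcol, mul_ite, mul_one, mul_zero]
    simp
  -- The linear map Ψ : u ↦ Ψ_m(uG)
  set Φ : (Fin k → K) →ₗ[F] Matrix (Fin m) (Fin n) F :=
    { toFun := fun u => Matrix.of fun (i : Fin m) (j : Fin n) =>
        β.repr (Matrix.vecMul u G j) i
      map_add' := by
        intro u v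
        ext i j
        simp [Matrix.add_vecMul]
      map_smul' := by
        intro c u
        ext i j
        have h1 : Matrix.vecMul (c • u) G j = c • Matrix.vecMul u G j := by
          simp [Matrix.vecMul, dotProduct, Finset.smul_sum, smul_mul_assoc]
        simp [h1] } with hΦ
  have hΦapply : ∀ u, Φ u = Matrix.of fun (i : Fin m) (j : Fin n) =>
      β.repr (Matrix.vecMul u G j) i := fun _ => rfl
  -- Φ is injective
  have hΦinj : Function.Injective Φ := by
    rw [injective_iff_map_eq_zero]
    intro u hu
    funext i
    have : β.repr (u i) = 0 := by
      ext r
      have := congrFun (congrFun hu r) (Fin.castLE hkn i)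
      simpa [hΦapply, key u i] using this
    simpa using congrArg β.repr.symm this
  -- The subspaces V i
  set V : Fin k → Submodule F K := fun i =>
    Submodule.span F (β '' {r : Fin m | (r : ℕ) < lam i}) with hV
  have hVmem : ∀ (i : Fin k) (x : K),
      x ∈ V i ↔ ∀ r : Fin m, lam i ≤ (r : ℕ) → β.repr x r = 0 := by
    intro i x
    rw [hV]
    rw [Module.Basis.mem_span_image]
    constructor
    · intro h r hr
      by_contra hne
      have := h (Finsupp.mem_support_iff.mpr hne)
      simp only [Set.mem_setOf_eq] at this
      omega
    · intro h r hr
      simp only [Finset.mem_coe, Finsupp.mem_support_iff] at hr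
      simp only [Set.mem_setOf_eq]
      by_contra hc
      exact hr (h r (by omega))
  have hVrank : ∀ i, Module.finrank F (V i) = lam i := by
    intro i
    have hrange : Set.range (fun r : Fin (lam i) => β (Fin.castLE (hlam i) r))
        = β '' {r : Fin m | (r : ℕ) < lam i} := by
      ext x
      constructor
      · rintro ⟨r, rfl⟩
        exact ⟨Fin.castLE (hlam i) r, by simpa using r.isLt, rfl⟩
      · rintro ⟨r, hr, rfl⟩
        exact ⟨⟨(r : ℕ), hr⟩, by simp⟩
    have hli : LinearIndependent F (fun r : Fin (lam i) => β (Fin.castLE (hlam i) r)) :=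
      β.linearIndependent.comp _ (fun a b hab => by
        simpa [Fin.ext_iff] using hab)
    have := finrank_span_eq_card hli
    rw [hrange] at this
    simpa using this
  -- The map Θ : Π i, V i → (Fin k → K)
  set Θ : (∀ i : Fin k, V i) →ₗ[F] (Fin k → K) :=
    LinearMap.pi (fun i => (V i).subtype ∘ₗ LinearMap.proj i) with hΘ
  have hΘapply : ∀ v i, Θ v i = (v i : K) := fun _ _ => rfl
  have hΘinj : Function.Injective Θ := by
    rw [injective_iff_map_eq_zero]
    intro v hv
    funext i
    exact Subtype.ext (by simpa [hΘapply] using congrFun hv i)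
  have hUS : U = ↑(LinearMap.range Θ) := by
    rw [hU]
    ext u
    simp only [Set.mem_setOf_eq, SetLike.mem_coe, LinearMap.mem_range]
    constructor
    · intro h
      refine ⟨fun i => ⟨u i, (hVmem i (u i)).mpr (h i)⟩, rfl⟩
    · rintro ⟨v, rfl⟩ i r hr
      exact (hVmem i _).mp (v i).2 r hr
  refine ⟨(LinearMap.range Θ).map Φ, ?_, ?_, ?_, ?_⟩
  · rw [Submodule.map_coe, hUS]; rfl
  · have e1 := (Submodule.equivMapOfInjective Φ hΦinj (LinearMap.range Θ)).finrank_eq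
    have e2 := (LinearEquiv.ofInjective Θ hΘinj).finrank_eq
    rw [← e1, ← e2, Module.finrank_pi_fintype]
    exact Finset.sum_congr rfl fun i _ => hVrank i
  · rintro A hA hA0
    obtain ⟨u, _, rfl⟩ := hA
    exact hMRD u (fun h => hA0 (by rw [h]; exact map_zero Φ))
  · intro u hu i r hr
    rw [hU] at hu
    simpa [key u i] using hu i r hr
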